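/- Let (N,B) be a symmetric Novikov algebra over ℂ with dim N = 6 that is non-commutative (there exist x,y ∈ N with xy ≠ yx). Then N is 2-step nilpotent: (xy)z = 0 for all x,y,z ∈ N. -/

import Mathlib

/-- Every symmetric non-commutative Novikov algebra of dimension 6
is 2-step nilpotent. -/
theorem stmt14
    {N : Type*} [AddCommGroup N] [Module ℂ N] [FiniteDimensional ℂ N]
    (mul : N →ₗ[ℂ] N →ₗ[ℂ] N)
    (hlsym : ∀ x y z : N,
      mul (mul x y) z - mul x (mul y z) = mul (mul y x) z - mul y (mul x z))
    (hrcomm : ∀ x y z : N, mul (mul x y) z = mul (mul x z) y)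
    (B : N →ₗ[ℂ] N →ₗ[ℂ] ℂ)
    (hBsymm : ∀ x y : N, B x y = B y x)
    (hBnondeg : ∀ x : N, (∀ y : N, B x y = 0) → x = 0)
    (hBassoc : ∀ x y z : N, B (mul x y) z = B x (mul y z))
    (hdim : Module.finrank ℂ N = 6)
    (hnoncomm : ∃ x y : N, mul x y ≠ mul y x) :
    ∀ x y z : N, mul (mul x y) z = 0 := by
  classical
  -- separation in the second argument
  have hB2 : ∀ u v : N, (∀ w : N, B w u = B w v) → u = v := by
    intro u v h
    have h0 : ∀ w : N, B (u - v) w = 0 := by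
      intro w
      rw [map_sub, LinearMap.sub_apply, hBsymm u w, hBsymm v w, h w, sub_self]
    exact sub_eq_zero.mp (hBnondeg _ h0)
  -- left multiplications commute
  have hLcomm : ∀ x y z : N, mul x (mul y z) = mul y (mul x z) := by
    intro x y z
    apply hB2
    intro w
    calc B w (mul x (mul y z)) = B (mul w x) (mul y z) := (hBassoc w x _).symm
      _ = B (mul (mul w x) y) z := (hBassoc _ y z).symm
      _ = B (mul (mul w y) x) z := by rw [hrcomm]
      _ = B (mul w y) (mul x z) := hBassoc _ x z
      _ = B w (mul y (mul x z)) := hBassoc w y _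
  -- commutators annihilate on the left
  have hrsym : ∀ x y z : N, mul (mul x y) z = mul (mul y x) z := by
    intro x y z
    have h := hlsym x y z
    rw [hLcomm x y z] at h
    exact sub_left_inj.mp h
  have hcann : ∀ x y u : N, mul (mul x y - mul y x) u = 0 := by
    intro x y u
    rw [map_sub, LinearMap.sub_apply, hrsym, sub_self]
  -- the trilinear form Ω(x,y,z) = B(xy - yx, z) is cyclic
  have hcyc : ∀ x y z : N, B (mul x y - mul y x) z = B (mul y z - mul z y) x := by
    intro x y z
    have e1 : B (mul x y) z = B (mul y z) x := by rw [hBassoc, hBsymm]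
    have e2 : B (mul z y) x = B (mul y x) z := by rw [hBassoc z y x, hBsymm]
    simp only [map_sub, LinearMap.sub_apply, e1, e2]
  -- a nonzero commutator and a witness for nondegeneracy
  obtain ⟨a, b, hab⟩ := hnoncomm
  set c : N := mul a b - mul b a with hc_def
  have hc : c ≠ 0 := sub_ne_zero.mpr hab
  obtain ⟨w, hw⟩ : ∃ w : N, B c w ≠ 0 := by
    by_contra h
    push_neg at h
    exact hc (hBnondeg c h)
  -- the span of products and its orthogonal
  set P : Submodule ℂ N := Submodule.span ℂ (Set.range fun p : N × N => mul p.1 p.2) with hP_def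
  have hmemP : ∀ u v : N, mul u v ∈ P := fun u v => Submodule.subset_span ⟨(u, v), rfl⟩
  have hrefl : LinearMap.IsRefl B := by
    intro x y h
    rw [hBsymm]; exact h
  have hnd : LinearMap.BilinForm.Nondegenerate (R := ℂ) (M := N) B :=
    ⟨hBnondeg, fun y h => hBnondeg y (fun x => by rw [hBsymm]; exact h x)⟩
  set A : Submodule ℂ N := LinearMap.BilinForm.orthogonal B P with hA_def
  have hA_mem : ∀ q ∈ A, ∀ p ∈ P, B p q = 0 := by
    intro q hq p hp
    exact hq p hp
  -- elements of A annihilate on the left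
  have hAmul : ∀ q ∈ A, ∀ v : N, mul q v = 0 := by
    intro q hq v
    apply hBnondeg
    intro u
    rw [hBassoc q v u, hBsymm]
    exact hA_mem q hq _ (hmemP v u)
  -- Ω vanishes whenever the last argument is in P
  have hΩP : ∀ x y : N, ∀ p ∈ P, B (mul x y - mul y x) p = 0 := by
    intro x y p hp
    have : P ≤ LinearMap.ker (B (mul x y - mul y x)) := by
      rw [Submodule.span_le]
      rintro _ ⟨⟨u, v⟩, rfl⟩
      simp only [SetLike.mem_coe, LinearMap.mem_ker]
      rw [← hBassoc (mul x y - mul y x) u v, hcann, map_zero, LinearMap.zero_apply]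
    exact this hp
  -- Ω vanishes whenever the last argument is in A
  have hΩA : ∀ x y : N, ∀ q ∈ A, B (mul x y - mul y x) q = 0 := by
    intro x y q hq
    rw [map_sub, LinearMap.sub_apply, hA_mem q hq _ (hmemP x y),
      hA_mem q hq _ (hmemP y x), sub_self]
  have hΩP' : ∀ x y : N, ∀ p ∈ P, B (mul x y) p = B (mul y x) p := by
    intro x y p hp
    have h := hΩP x y p hp
    rw [map_sub, LinearMap.sub_apply] at h
    exact sub_eq_zero.mp h
  have hΩA' : ∀ x y : N, ∀ q ∈ A, B (mul x y) q = B (mul y x) q := by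
    intro x y q hq
    have h := hΩA x y q hq
    rw [map_sub, LinearMap.sub_apply] at h
    exact sub_eq_zero.mp h
  -- suppose the claim fails
  by_contra hcon
  push_neg at hcon
  obtain ⟨x₀, y₀, z₀, h₀⟩ := hcon
  have hqA : mul x₀ y₀ ∉ A := fun h => h₀ (hAmul _ h z₀)
  have hlt : P ⊓ A < P := inf_lt_left.mpr fun hPA => hqA (hPA (hmemP x₀ y₀))
  have hk_lt : Module.finrank ℂ ↥(P ⊓ A) < Module.finrank ℂ ↥P :=
    Submodule.finrank_lt_finrank_of_lt hlt
  have hk_le : Module.finrank ℂ ↥(P ⊓ A) ≤ Module.finrank ℂ ↥A :=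
    Submodule.finrank_mono inf_le_right
  have hA_dim : Module.finrank ℂ ↥A = 6 - Module.finrank ℂ ↥P := by
    rw [← hdim]
    exact LinearMap.BilinForm.finrank_orthogonal hnd P
  have hP_le : Module.finrank ℂ ↥P ≤ 6 := hdim ▸ Submodule.finrank_le P
  -- the map G given by Ω against the three commutators
  set c₂ : N := mul b w - mul w b with hc2_def
  set c₃ : N := mul w a - mul a w with hc3_def
  set G : N →ₗ[ℂ] (Fin 3 → ℂ) := LinearMap.pi ![B c, B c₂, B c₃] with hG_def
  have hGapp : ∀ (v : N), G v = ![B c v, B c₂ v, B c₃ v] := by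
    intro v
    funext i
    fin_cases i <;> simp [hG_def, LinearMap.pi_apply]
  -- P ⊔ A is contained in the kernel of G
  have hsupker : P ⊔ A ≤ LinearMap.ker G := by
    apply sup_le
    · intro p hp
      rw [LinearMap.mem_ker, hGapp]
      funext i
      fin_cases i <;>
        simp [hc_def, hc2_def, hc3_def, hΩP' _ _ p hp]
    · intro q hq
      rw [LinearMap.mem_ker, hGapp]
      funext i
      fin_cases i <;>
        simp [hc_def, hc2_def, hc3_def, hΩA' _ _ q hq]
  -- the nine evaluation values
  have v01 : B c a = 0 := by rw [hc_def, hcyc a b a, hcyc b a a]; simp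
  have v02 : B c b = 0 := by rw [hc_def, hcyc a b b]; simp
  have v10 : B c₂ w = 0 := by rw [hc2_def, hcyc b w w]; simp
  have v11 : B c₂ a = B c w := by rw [hc2_def, hc_def, hcyc b w a, hcyc w a b]
  have v12 : B c₂ b = 0 := by rw [hc2_def, hcyc b w b, hcyc w b b]; simp
  have v20 : B c₃ w = 0 := by rw [hc3_def, hcyc w a w, hcyc a w w]; simp
  have v21 : B c₃ a = 0 := by rw [hc3_def, hcyc w a a]; simp
  have v22 : B c₃ b = B c w := by rw [hc3_def, hc_def, hcyc w a b]
  -- G is surjective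
  have hsurj : Function.Surjective G := by
    intro u
    refine ⟨(u 0 / B c w) • w + (u 1 / B c w) • a + (u 2 / B c w) • b, ?_⟩
    rw [hGapp]
    funext i
    fin_cases i <;>
      simp [map_add, map_smul, v01, v02, v10, v11, v12, v20, v21, v22, smul_eq_mul,
        div_mul_cancel₀ _ hw]
  have hrange : LinearMap.range G = ⊤ := LinearMap.range_eq_top.mpr hsurj
  have hker_dim : Module.finrank ℂ ↥(LinearMap.ker G) = 3 := by
    have h1 := LinearMap.finrank_range_add_finrank_ker G
    rw [hrange, finrank_top, Module.finrank_fin_fun, hdim] at h1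
    omega
  have hsup_le : Module.finrank ℂ ↥(P ⊔ A) ≤ 3 :=
    hker_dim ▸ Submodule.finrank_mono hsupker
  have hsupinf := Submodule.finrank_sup_add_finrank_inf_eq P A
  omega
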